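/- Let G be a simple cubic graph (every vertex has degree exactly 3) and let H be a Hamiltonian cycle of G. Suppose v1, v2, v3, v4 are four distinct vertices forming a 4-cycle in G, i.e., v1v2, v2v3, v3v4, v4v1 are edges of G, and suppose that the third edge of G incident to v1 (the one distinct from v1v2 and v1v4) and the third edge of G incident to v3 (the one distinct from v2v3 and v3v4) both belong to H. Then the third edge of G incident to v2 (distinct from v1v2 and v2v3) and the third edge of G incident to v4 (distinct from v3v4 and v4v1) also belong to H. -/

import Mathlib

open SimpleGraph

private lemma path_end_unique {V : Type*} {G : SimpleGraph V} {w u : V} (q : G.Walk w u)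
    (hq : q.IsPath) : ∀ e ∈ q.edges, ∀ f ∈ q.edges, u ∈ e → u ∈ f → e = f := by
  induction q with
  | nil => simp
  | @cons w y u h q ih =>
    intro e he f hf hue huf
    rw [SimpleGraph.Walk.cons_isPath_iff] at hq
    have hwu : w ≠ u := fun hwu => hq.2 (hwu ▸ q.end_mem_support)
    rw [SimpleGraph.Walk.edges_cons, List.mem_cons] at he hf
    rcases he with rfl | he
    · rcases hf with rfl | hf
      · rfl
      · rw [Sym2.mem_iff] at hue
        rcases hue with rfl | rfl
        · exact absurd rfl hwu
        · -- y = u, so q : Walk u u is a path, hence nil, contradicting hf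
          rw [SimpleGraph.Walk.isPath_iff_eq_nil] at hq
          rw [hq.1] at hf
          simp at hf
    · rcases hf with rfl | hf
      · rw [Sym2.mem_iff] at huf
        rcases huf with rfl | rfl
        · exact absurd rfl hwu
        · rw [SimpleGraph.Walk.isPath_iff_eq_nil] at hq
          rw [hq.1] at he
          simp at he
      · exact ih hq.1 e he f hf hue huf

private lemma cycle_two_edges0 {V : Type*} {G : SimpleGraph V} {v : V}
    (p : G.Walk v v) (hp : p.IsCycle) :
    ∃ e₁ e₂ : Sym2 V, e₁ ≠ e₂ ∧ e₁ ∈ p.edges ∧ e₂ ∈ p.edges ∧ v ∈ e₁ ∧ v ∈ e₂ ∧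
      ∀ e ∈ p.edges, v ∈ e → e = e₁ ∨ e = e₂ := by
  cases p with
  | nil => exact absurd hp SimpleGraph.Walk.IsCycle.not_of_nil
  | @cons _ w _ h q =>
    rw [SimpleGraph.Walk.cons_isCycle_iff] at hp
    have hvw : v ≠ w := h.ne
    obtain ⟨x, hx, r, hr⟩ := SimpleGraph.Walk.exists_eq_cons_of_ne hvw q.reverse
    have hx2 : s(v, x) ∈ q.edges := by
      have : s(v, x) ∈ q.reverse.edges := by rw [hr]; simp
      rwa [SimpleGraph.Walk.edges_reverse, List.mem_reverse] at this
    refine ⟨s(v, w), s(v, x), ?_, by simp, ?_, by simp, by simp, ?_⟩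
    · intro heq
      rw [heq] at hp
      exact hp.2 hx2
    · rw [SimpleGraph.Walk.edges_cons]
      exact List.mem_cons_of_mem _ hx2
    · intro e he hve
      rw [SimpleGraph.Walk.edges_cons, List.mem_cons] at he
      rcases he with rfl | he
      · exact Or.inl rfl
      · exact Or.inr (path_end_unique q hp.1 e he s(v, x) hx2 hve (by simp))

private lemma cycle_two_edges {V : Type*} [DecidableEq V] {G : SimpleGraph V} {v u : V}
    (p : G.Walk v v) (hp : p.IsCycle) (hu : u ∈ p.support) :
    ∃ e₁ e₂ : Sym2 V, e₁ ≠ e₂ ∧ e₁ ∈ p.edges ∧ e₂ ∈ p.edges ∧ u ∈ e₁ ∧ u ∈ e₂ ∧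
      ∀ e ∈ p.edges, u ∈ e → e = e₁ ∨ e = e₂ := by
  obtain ⟨e₁, e₂, hne, h1, h2, hu1, hu2, hcov⟩ := cycle_two_edges0 (p.rotate u hu) (hp.rotate hu)
  have hmem : ∀ e : Sym2 V, e ∈ (p.rotate u hu).edges ↔ e ∈ p.edges :=
    fun e => (p.rotate_edges u hu).mem_iff
  exact ⟨e₁, e₂, hne, (hmem e₁).mp h1, (hmem e₂).mp h2, hu1, hu2,
    fun e he hue => hcov e ((hmem e).mpr he) hue⟩

private lemma at_most_two {V : Type*} [DecidableEq V] {G : SimpleGraph V} {v0 u : V}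
    (H : G.Walk v0 v0) (hc : H.IsCycle) (hu : u ∈ H.support)
    {e f g : Sym2 V} (he : e ∈ H.edges) (hf : f ∈ H.edges) (hg : g ∈ H.edges)
    (hue : u ∈ e) (huf : u ∈ f) (hug : u ∈ g)
    (hef : e ≠ f) (heg : e ≠ g) (hfg : f ≠ g) : False := by
  obtain ⟨e₁, e₂, hne, _, _, _, _, hcov⟩ := cycle_two_edges H hc hu
  rcases hcov e he hue with rfl | rfl <;> rcases hcov f hf huf with rfl | rfl <;>
    rcases hcov g hg hug with rfl | rfl <;> simp_all

private lemma exists_third {V : Type*} [Fintype V] [DecidableEq V] {G : SimpleGraph V}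
    [DecidableRel G.Adj] {v : V} (h3 : G.degree v = 3) (a b : Sym2 V) :
    ∃ e ∈ G.incidenceSet v, e ≠ a ∧ e ≠ b := by
  by_contra hc
  push_neg at hc
  have hsub : G.incidenceFinset v ⊆ {a, b} := by
    intro e he
    rw [SimpleGraph.mem_incidenceFinset] at he
    by_cases hea : e = a
    · simp [hea]
    · simp [hc e he hea]
  have h1 := Finset.card_le_card hsub
  have h2 : ({a, b} : Finset (Sym2 V)).card ≤ 2 :=
    (Finset.card_insert_le _ _).trans (by simp)
  rw [SimpleGraph.card_incidenceFinset_eq_degree, h3] at h1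
  omega

private lemma four_distinct {α : Type*} [DecidableEq α] {s : Finset α} (hs : s.card = 3)
    {a b c d : α} (ha : a ∈ s) (hb : b ∈ s) (hc : c ∈ s) (hd : d ∈ s)
    (hab : a ≠ b) (hac : a ≠ c) (had : a ≠ d) (hbc : b ≠ c) (hbd : b ≠ d) (hcd : c ≠ d) :
    False := by
  have hsub : ({a, b, c, d} : Finset α) ⊆ s := by
    intro x hx
    simp only [Finset.mem_insert, Finset.mem_singleton] at hx
    rcases hx with rfl | rfl | rfl | rfl <;> assumption
  have h4 : ({a, b, c, d} : Finset α).card = 4 := by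
    rw [Finset.card_insert_of_notMem (by simp [hab, hac, had]),
      Finset.card_insert_of_notMem (by simp [hbc, hbd]),
      Finset.card_insert_of_notMem (by simp [hcd]), Finset.card_singleton]
  have := Finset.card_le_card hsub
  omega

theorem stmt_11 {V : Type*} [Fintype V] [DecidableEq V]
    (G : SimpleGraph V) [DecidableRel G.Adj]
    (hcubic : ∀ v : V, G.degree v = 3)
    {v0 : V} (H : G.Walk v0 v0) (hH : H.IsHamiltonianCycle)
    (v1 v2 v3 v4 : V) (hnodup : [v1, v2, v3, v4].Nodup)
    (h12 : G.Adj v1 v2) (h23 : G.Adj v2 v3) (h34 : G.Adj v3 v4) (h41 : G.Adj v4 v1)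
    (hv1 : ∀ e ∈ G.incidenceSet v1, e ≠ s(v1, v2) → e ≠ s(v4, v1) → e ∈ H.edges)
    (hv3 : ∀ e ∈ G.incidenceSet v3, e ≠ s(v2, v3) → e ≠ s(v3, v4) → e ∈ H.edges) :
    (∀ e ∈ G.incidenceSet v2, e ≠ s(v1, v2) → e ≠ s(v2, v3) → e ∈ H.edges) ∧
    (∀ e ∈ G.incidenceSet v4, e ≠ s(v3, v4) → e ≠ s(v4, v1) → e ∈ H.edges) := by
  have hne12 : v1 ≠ v2 := by rintro rfl; simp at hnodup
  have hne13 : v1 ≠ v3 := by rintro rfl; simp at hnodup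
  have hne14 : v1 ≠ v4 := by rintro rfl; simp at hnodup
  have hne23 : v2 ≠ v3 := by rintro rfl; simp at hnodup
  have hne24 : v2 ≠ v4 := by rintro rfl; simp at hnodup
  have hne34 : v3 ≠ v4 := by rintro rfl; simp at hnodup
  have hcyc := hH.isCycle
  have hsup : ∀ u : V, u ∈ H.support := fun u => hH.mem_support u
  have s12_41 : s(v1, v2) ≠ s(v4, v1) := by simp only [Ne, Sym2.eq_iff]; tauto
  have s12_23 : s(v1, v2) ≠ s(v2, v3) := by simp only [Ne, Sym2.eq_iff]; tauto
  have s23_34 : s(v2, v3) ≠ s(v3, v4) := by simp only [Ne, Sym2.eq_iff]; tauto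
  have s34_41 : s(v3, v4) ≠ s(v4, v1) := by simp only [Ne, Sym2.eq_iff]; tauto
  -- third edges at v1 and v3, forced into H
  obtain ⟨e1, he1inc, he1a, he1b⟩ := exists_third (hcubic v1) s(v1, v2) s(v4, v1)
  obtain ⟨e3, he3inc, he3a, he3b⟩ := exists_third (hcubic v3) s(v2, v3) s(v3, v4)
  have he1H : e1 ∈ H.edges := hv1 e1 he1inc he1a he1b
  have he3H : e3 ∈ H.edges := hv3 e3 he3inc he3a he3b
  have hv1e1 : v1 ∈ e1 := he1inc.2
  have hv3e3 : v3 ∈ e3 := he3inc.2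
  -- membership of H edges in incidence finsets
  have hincF : ∀ (u : V) (e : Sym2 V), e ∈ H.edges → u ∈ e → e ∈ G.incidenceFinset u := by
    intro u e he hu
    rw [SimpleGraph.mem_incidenceFinset]
    exact ⟨H.edges_subset_edgeSet he, hu⟩
  have hcardF : ∀ u : V, (G.incidenceFinset u).card = 3 := by
    intro u; rw [SimpleGraph.card_incidenceFinset_eq_degree]; exact hcubic u
  -- Step A: both edges of the 4-cycle at v2 in H leads to contradiction
  have stepA : s(v1, v2) ∈ H.edges → s(v2, v3) ∈ H.edges → False := by
    intro hA hB
    have h41n : s(v4, v1) ∉ H.edges := by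
      intro hc
      exact at_most_two H hcyc (hsup v1) he1H hA hc hv1e1 (by simp) (by simp)
        he1a (by exact he1b) s12_41
    have h34n : s(v3, v4) ∉ H.edges := by
      intro hc
      exact at_most_two H hcyc (hsup v3) he3H hB hc hv3e3 (by simp) (by simp)
        he3a he3b s23_34
    obtain ⟨g₁, g₂, hg, hg1H, hg2H, hg1u, hg2u, _⟩ := cycle_two_edges H hcyc (hsup v4)
    have hm34 : s(v3, v4) ∈ G.incidenceFinset v4 := by
      rw [SimpleGraph.mem_incidenceFinset]; exact ⟨G.mem_edgeSet.mpr h34, by simp⟩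
    have hm41 : s(v4, v1) ∈ G.incidenceFinset v4 := by
      rw [SimpleGraph.mem_incidenceFinset]; exact ⟨G.mem_edgeSet.mpr h41, by simp⟩
    have hg1a : g₁ ≠ s(v3, v4) := fun h => h34n (h ▸ hg1H)
    have hg1b : g₁ ≠ s(v4, v1) := fun h => h41n (h ▸ hg1H)
    have hg2a : g₂ ≠ s(v3, v4) := fun h => h34n (h ▸ hg2H)
    have hg2b : g₂ ≠ s(v4, v1) := fun h => h41n (h ▸ hg2H)
    exact four_distinct (hcardF v4) (hincF v4 g₁ hg1H hg1u) (hincF v4 g₂ hg2H hg2u)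
      hm34 hm41 hg hg1a hg1b hg2a hg2b s34_41
  have stepB : s(v3, v4) ∈ H.edges → s(v4, v1) ∈ H.edges → False := by
    intro hA hB
    have h12n : s(v1, v2) ∉ H.edges := by
      intro hc
      exact at_most_two H hcyc (hsup v1) he1H hB hc hv1e1 (by simp) (by simp)
        he1b he1a s12_41.symm
    have h23n : s(v2, v3) ∉ H.edges := by
      intro hc
      exact at_most_two H hcyc (hsup v3) he3H hA hc hv3e3 (by simp) (by simp)
        he3b he3a s23_34.symm
    obtain ⟨g₁, g₂, hg, hg1H, hg2H, hg1u, hg2u, _⟩ := cycle_two_edges H hcyc (hsup v2)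
    have hm12 : s(v1, v2) ∈ G.incidenceFinset v2 := by
      rw [SimpleGraph.mem_incidenceFinset]; exact ⟨G.mem_edgeSet.mpr h12, by simp⟩
    have hm23 : s(v2, v3) ∈ G.incidenceFinset v2 := by
      rw [SimpleGraph.mem_incidenceFinset]; exact ⟨G.mem_edgeSet.mpr h23, by simp⟩
    have hg1a : g₁ ≠ s(v1, v2) := fun h => h12n (h ▸ hg1H)
    have hg1b : g₁ ≠ s(v2, v3) := fun h => h23n (h ▸ hg1H)
    have hg2a : g₂ ≠ s(v1, v2) := fun h => h12n (h ▸ hg2H)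
    have hg2b : g₂ ≠ s(v2, v3) := fun h => h23n (h ▸ hg2H)
    exact four_distinct (hcardF v2) (hincF v2 g₁ hg1H hg1u) (hincF v2 g₂ hg2H hg2u)
      hm12 hm23 hg hg1a hg1b hg2a hg2b s12_23
  constructor
  · intro e he hea heb
    obtain ⟨g₁, g₂, hg, hg1H, hg2H, hg1u, hg2u, _⟩ := cycle_two_edges H hcyc (hsup v2)
    by_cases h1 : e = g₁
    · exact h1 ▸ hg1H
    by_cases h2 : e = g₂
    · exact h2 ▸ hg2H
    exfalso
    have hm12 : s(v1, v2) ∈ G.incidenceFinset v2 := by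
      rw [SimpleGraph.mem_incidenceFinset]; exact ⟨G.mem_edgeSet.mpr h12, by simp⟩
    have hm23 : s(v2, v3) ∈ G.incidenceFinset v2 := by
      rw [SimpleGraph.mem_incidenceFinset]; exact ⟨G.mem_edgeSet.mpr h23, by simp⟩
    have hme : e ∈ G.incidenceFinset v2 := by rw [SimpleGraph.mem_incidenceFinset]; exact he
    have hsub : ({s(v1, v2), s(v2, v3), e} : Finset (Sym2 V)) ⊆ G.incidenceFinset v2 := by
      intro x hx
      simp only [Finset.mem_insert, Finset.mem_singleton] at hx
      rcases hx with rfl | rfl | rfl <;> assumption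
    have hset : ({s(v1, v2), s(v2, v3), e} : Finset (Sym2 V)) = G.incidenceFinset v2 := by
      apply Finset.eq_of_subset_of_card_le hsub
      rw [hcardF v2]
      rw [Finset.card_insert_of_notMem (by simp [s12_23, Ne.symm hea]),
        Finset.card_insert_of_notMem (by simp [Ne.symm heb]), Finset.card_singleton]
    have hg1m : g₁ = s(v1, v2) ∨ g₁ = s(v2, v3) := by
      have := (hset ▸ hincF v2 g₁ hg1H hg1u)
      simp only [Finset.mem_insert, Finset.mem_singleton] at this
      rcases this with h | h | h
      · exact Or.inl h
      · exact Or.inr h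
      · exact absurd h.symm h1
    have hg2m : g₂ = s(v1, v2) ∨ g₂ = s(v2, v3) := by
      have := (hset ▸ hincF v2 g₂ hg2H hg2u)
      simp only [Finset.mem_insert, Finset.mem_singleton] at this
      rcases this with h | h | h
      · exact Or.inl h
      · exact Or.inr h
      · exact absurd h.symm h2
    rcases hg1m with rfl | rfl <;> rcases hg2m with rfl | rfl
    · exact hg rfl
    · exact stepA hg1H hg2H
    · exact stepA hg2H hg1H
    · exact hg rfl
  · intro e he hea heb
    obtain ⟨g₁, g₂, hg, hg1H, hg2H, hg1u, hg2u, _⟩ := cycle_two_edges H hcyc (hsup v4)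
    by_cases h1 : e = g₁
    · exact h1 ▸ hg1H
    by_cases h2 : e = g₂
    · exact h2 ▸ hg2H
    exfalso
    have hm34 : s(v3, v4) ∈ G.incidenceFinset v4 := by
      rw [SimpleGraph.mem_incidenceFinset]; exact ⟨G.mem_edgeSet.mpr h34, by simp⟩
    have hm41 : s(v4, v1) ∈ G.incidenceFinset v4 := by
      rw [SimpleGraph.mem_incidenceFinset]; exact ⟨G.mem_edgeSet.mpr h41, by simp⟩
    have hme : e ∈ G.incidenceFinset v4 := by rw [SimpleGraph.mem_incidenceFinset]; exact he
    have hsub : ({s(v3, v4), s(v4, v1), e} : Finset (Sym2 V)) ⊆ G.incidenceFinset v4 := by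
      intro x hx
      simp only [Finset.mem_insert, Finset.mem_singleton] at hx
      rcases hx with rfl | rfl | rfl <;> assumption
    have hset : ({s(v3, v4), s(v4, v1), e} : Finset (Sym2 V)) = G.incidenceFinset v4 := by
      apply Finset.eq_of_subset_of_card_le hsub
      rw [hcardF v4]
      rw [Finset.card_insert_of_notMem (by simp [s34_41, Ne.symm hea]),
        Finset.card_insert_of_notMem (by simp [Ne.symm heb]), Finset.card_singleton]
    have hg1m : g₁ = s(v3, v4) ∨ g₁ = s(v4, v1) := by
      have := (hset ▸ hincF v4 g₁ hg1H hg1u)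
      simp only [Finset.mem_insert, Finset.mem_singleton] at this
      rcases this with h | h | h
      · exact Or.inl h
      · exact Or.inr h
      · exact absurd h.symm h1
    have hg2m : g₂ = s(v3, v4) ∨ g₂ = s(v4, v1) := by
      have := (hset ▸ hincF v4 g₂ hg2H hg2u)
      simp only [Finset.mem_insert, Finset.mem_singleton] at this
      rcases this with h | h | h
      · exact Or.inl h
      · exact Or.inr h
      · exact absurd h.symm h2
    rcases hg1m with rfl | rfl <;> rcases hg2m with rfl | rfl
    · exact hg rfl
    · exact stepB hg1H hg2H
    · exact stepB hg2H hg1H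
    · exact hg rfl
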